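/- arXiv:1508.00929 — 2 statements merged into one kernel-verified Lean document; each statement's English description precedes it below -/
import Mathlib

section
/- Let B be the open unit disk in ℝ² and let f₁, f₂ ∈ L¹(B) be functions with fᵢ > 0 almost everywhere and ∫_B fᵢ = 1 for i = 1,2. Then there exist a unit vector θ ∈ S¹ and a real number a ∈ (-1,1) such that ∫_{x ∈ B : x·θ < a} f₁(x) dx = 1/2 and ∫_{x ∈ B : x·θ > a} f₂(x) dx = 1/2. -/
open MeasureTheory Metric
open scoped RealInnerProductSpace

noncomputable abbrev E2 := EuclideanSpace ℝ (Fin 2)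

noncomputable def BB : Set E2 := ball (0:E2) 1

lemma line_null (θ : E2) (hθ : θ ≠ 0) (a : ℝ) : volume {x : E2 | ⟪x, θ⟫ = a} = 0 := by
  set x₀ : E2 := (a / (‖θ‖^2)) • θ with hx₀
  have hθn : ‖θ‖ ≠ 0 := norm_ne_zero_iff.mpr hθ
  have hx₀i : ⟪x₀, θ⟫ = a := by
    rw [hx₀, real_inner_smul_left, real_inner_self_eq_norm_sq]
    field_simp
  have hker : ({x : E2 | ⟪x, θ⟫ = a} : Set E2)
      = (fun x => -x₀ + x) ⁻¹' (LinearMap.ker (innerSL ℝ θ : E2 →ₗ[ℝ] ℝ) : Set E2) := by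
    ext x
    simp only [Set.mem_setOf_eq, Set.mem_preimage, SetLike.mem_coe, LinearMap.mem_ker]
    rw [show ((innerSL ℝ θ : E2 →ₗ[ℝ] ℝ) (-x₀ + x) : ℝ) = ⟪θ, -x₀ + x⟫ from rfl]
    rw [inner_add_right, inner_neg_right, real_inner_comm x₀ θ, real_inner_comm x θ, hx₀i]
    constructor <;> intro h <;> linarith
  rw [hker, measure_preimage_add]
  exact Measure.addHaar_submodule volume _ (by
    intro h
    have : θ ∈ LinearMap.ker (innerSL ℝ θ : E2 →ₗ[ℝ] ℝ) := h ▸ Submodule.mem_top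
    rw [LinearMap.mem_ker] at this
    have h2 : ⟪θ, θ⟫ = 0 := this
    exact hθ (inner_self_eq_zero.mp h2))

lemma cont_inner (θ : E2) : Continuous (fun x : E2 => ⟪x, θ⟫) :=
  continuous_id.inner continuous_const

lemma meas_lt (θ : E2) (a : ℝ) : MeasurableSet {x : E2 | ⟪x, θ⟫ < a} :=
  measurableSet_lt (cont_inner θ).measurable measurable_const

lemma meas_gt (θ : E2) (a : ℝ) : MeasurableSet {x : E2 | a < ⟪x, θ⟫} :=
  measurableSet_lt measurable_const (cont_inner θ).measurable

noncomputable def Fi (f : E2 → ℝ) (θ : E2) (a : ℝ) : ℝ :=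
  ∫ x in BB ∩ {x | ⟪x, θ⟫ < a}, f x

lemma inner_lt_one {x θ : E2} (hx : x ∈ BB) (hθ : ‖θ‖ = 1) : |⟪x, θ⟫| < 1 := by
  calc |⟪x, θ⟫| ≤ ‖x‖ * ‖θ‖ := abs_real_inner_le_norm x θ
  _ = ‖x‖ := by rw [hθ, mul_one]
  _ < 1 := by simpa [BB] using hx

lemma Fi_empty {f : E2 → ℝ} {θ : E2} (hθ : ‖θ‖ = 1) {a : ℝ} (ha : a ≤ -1) : Fi f θ a = 0 := by
  have : BB ∩ {x | ⟪x, θ⟫ < a} = ∅ := by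
    ext x; simp only [Set.mem_inter_iff, Set.mem_setOf_eq, Set.mem_empty_iff_false, iff_false]
    rintro ⟨hx, hlt⟩
    have := (abs_lt.mp (inner_lt_one hx hθ)).1
    linarith
  rw [Fi, this, Measure.restrict_empty, integral_zero_measure]

lemma Fi_full {f : E2 → ℝ} {θ : E2} (hθ : ‖θ‖ = 1) {a : ℝ} (ha : 1 ≤ a) :
    Fi f θ a = ∫ x in BB, f x := by
  have : BB ∩ {x | ⟪x, θ⟫ < a} = BB := by
    apply Set.inter_eq_left.mpr
    intro x hx
    have := (abs_lt.mp (inner_lt_one hx hθ)).2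
    simp only [Set.mem_setOf_eq]; linarith
  rw [Fi, this]

lemma Fi_split {f : E2 → ℝ} {θ : E2} (hθ : ‖θ‖ = 1) (hint : IntegrableOn f BB) (a : ℝ) :
    Fi f θ a + ∫ x in BB ∩ {x | a < ⟪x, θ⟫}, f x = ∫ x in BB, f x := by
  have hθ0 : θ ≠ 0 := fun h => by simp [h] at hθ
  have hnull := line_null θ hθ0 a
  have hd : Disjoint (BB ∩ {x | ⟪x, θ⟫ < a}) (BB ∩ {x : E2 | a < ⟪x, θ⟫}) := by
    apply Set.disjoint_left.mpr
    rintro x ⟨_, h1⟩ ⟨_, h2⟩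
    simp only [Set.mem_setOf_eq] at h1 h2; linarith
  rw [Fi, ← setIntegral_union hd (measurableSet_ball.inter (meas_gt θ a))
    (hint.mono_set Set.inter_subset_left) (hint.mono_set Set.inter_subset_left)]
  apply setIntegral_congr_set
  apply (MeasureTheory.ae_eq_set).mpr
  constructor
  · rw [show (BB ∩ {x | ⟪x, θ⟫ < a} ∪ BB ∩ {x : E2 | a < ⟪x, θ⟫}) \ BB = ∅ by
      rw [Set.diff_eq_empty]
      exact Set.union_subset Set.inter_subset_left Set.inter_subset_left]
    exact measure_empty
  · apply measure_mono_null _ hnull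
    rintro x ⟨hxB, hx⟩
    simp only [Set.mem_union, Set.mem_inter_iff, Set.mem_setOf_eq, not_or, not_and] at hx
    simp only [Set.mem_setOf_eq]
    have h1 := hx.1 hxB
    have h2 := hx.2 hxB
    linarith

lemma Fi_neg (f : E2 → ℝ) (θ : E2) (a : ℝ) :
    Fi f (-θ) (-a) = ∫ x in BB ∩ {x | a < ⟪x, θ⟫}, f x := by
  rw [Fi, show BB ∩ {x : E2 | ⟪x, -θ⟫ < -a} = BB ∩ {x | a < ⟪x, θ⟫} by
    ext x
    simp only [Set.mem_inter_iff, Set.mem_setOf_eq, inner_neg_right, neg_lt_neg_iff]]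

lemma Fi_mono {f : E2 → ℝ} (hint : IntegrableOn f BB)
    (hpos : 0 ≤ᵐ[volume.restrict BB] f) (θ : E2) {a b : ℝ} (hab : a ≤ b) :
    Fi f θ a ≤ Fi f θ b := by
  apply setIntegral_mono_set (hint.mono_set Set.inter_subset_left)
    (ae_restrict_of_ae_restrict_of_subset Set.inter_subset_left hpos)
  exact HasSubset.Subset.eventuallyLE
    (Set.inter_subset_inter_right _ (fun x hx => lt_of_lt_of_le hx hab))

lemma slab_pos {f : E2 → ℝ} (hint : IntegrableOn f BB)
    (hpos : ∀ᵐ x ∂(volume.restrict BB), 0 < f x) {θ : E2} (hθ : ‖θ‖ = 1)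
    {a b : ℝ} (ha : -1 ≤ a) (hab : a < b) (hb : b ≤ 1) :
    0 < ∫ x in BB ∩ {x | a < ⟪x, θ⟫ ∧ ⟪x, θ⟫ < b}, f x := by
  set S : Set E2 := BB ∩ {x | a < ⟪x, θ⟫ ∧ ⟪x, θ⟫ < b} with hS
  have hSsub : S ⊆ BB := Set.inter_subset_left
  have hSopen : IsOpen S := by
    have : {x : E2 | a < ⟪x, θ⟫ ∧ ⟪x, θ⟫ < b} = (fun x : E2 => ⟪x, θ⟫) ⁻¹' (Set.Ioo a b) := rfl
    exact isOpen_ball.inter (this ▸ isOpen_Ioo.preimage (cont_inner θ))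
  have hSne : S.Nonempty := by
    refine ⟨((a+b)/2) • θ, ?_, ?_, ?_⟩
    · simp only [BB, mem_ball, dist_zero_right, norm_smul, Real.norm_eq_abs, hθ, mul_one]
      rw [abs_lt]; constructor <;> linarith
    · simp only [Set.mem_setOf_eq, real_inner_smul_left]
      rw [real_inner_self_eq_norm_sq, hθ]; nlinarith
    · simp only [Set.mem_setOf_eq, real_inner_smul_left]
      rw [real_inner_self_eq_norm_sq, hθ]; nlinarith
  have hSmeas : MeasurableSet S := hSopen.measurableSet
  have hposS : ∀ᵐ x ∂(volume.restrict S), 0 < f x :=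
    ae_restrict_of_ae_restrict_of_subset hSsub hpos
  rw [setIntegral_pos_iff_support_of_nonneg_ae (hposS.mono fun x hx => le_of_lt hx)
    (hint.mono_set hSsub)]
  have hnull : volume (S \ Function.support f) = 0 := by
    have := (ae_restrict_iff' hSmeas).mp hposS
    rw [ae_iff] at this
    apply measure_mono_null _ this
    rintro x ⟨hxS, hxn⟩
    simp only [Set.mem_setOf_eq, not_forall]
    refine ⟨hxS, ?_⟩
    simp only [Function.mem_support, not_not] at hxn
    simp [hxn]
  have hSpos : 0 < volume S := hSopen.measure_pos volume hSne
  have : volume S ≤ volume (Function.support f ∩ S) + volume (S \ Function.support f) := by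
    apply le_trans (measure_mono (by intro x hx; by_cases h : x ∈ Function.support f
                                     · exact Or.inl ⟨h, hx⟩
                                     · exact Or.inr ⟨hx, h⟩)) (measure_union_le _ _)
  rw [hnull, add_zero] at this
  exact lt_of_lt_of_le hSpos this

lemma Fi_strict {f : E2 → ℝ} (hint : IntegrableOn f BB)
    (hpos : ∀ᵐ x ∂(volume.restrict BB), 0 < f x) {θ : E2} (hθ : ‖θ‖ = 1)
    {a b : ℝ} (ha : -1 ≤ a) (hab : a < b) (hb : b ≤ 1) :
    Fi f θ a < Fi f θ b := by
  set s : Set E2 := BB ∩ {x | ⟪x, θ⟫ < a} with hs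
  set S : Set E2 := BB ∩ {x | a < ⟪x, θ⟫ ∧ ⟪x, θ⟫ < b} with hSdef
  have hSmeas : MeasurableSet S := by
    apply measurableSet_ball.inter
    exact (measurableSet_lt measurable_const (cont_inner θ).measurable).inter
      (measurableSet_lt (cont_inner θ).measurable measurable_const)
  have hd : Disjoint s S := by
    apply Set.disjoint_left.mpr
    rintro x ⟨_, h1⟩ ⟨_, h2, _⟩
    simp only [Set.mem_setOf_eq] at h1; linarith
  have hnn : 0 ≤ᵐ[volume.restrict BB] f := hpos.mono fun x hx => le_of_lt hx
  have key : Fi f θ a + ∫ x in S, f x = ∫ x in s ∪ S, f x :=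
    (setIntegral_union hd hSmeas (hint.mono_set Set.inter_subset_left)
      (hint.mono_set Set.inter_subset_left)).symm
  have hsub : s ∪ S ⊆ BB ∩ {x | ⟪x, θ⟫ < b} := by
    rintro x (⟨hxB, hx⟩ | ⟨hxB, _, hx⟩) <;>
      exact ⟨hxB, by simp only [Set.mem_setOf_eq] at hx ⊢; linarith⟩
  have hle : ∫ x in s ∪ S, f x ≤ Fi f θ b := by
    apply setIntegral_mono_set (hint.mono_set Set.inter_subset_left)
      (ae_restrict_of_ae_restrict_of_subset Set.inter_subset_left hnn)
      (HasSubset.Subset.eventuallyLE hsub)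
  have := slab_pos hint hpos hθ ha hab hb
  rw [← hSdef] at this
  calc Fi f θ a < Fi f θ a + ∫ x in S, f x := by linarith
  _ = ∫ x in s ∪ S, f x := key
  _ ≤ Fi f θ b := hle

lemma Fi_contAt {f : E2 → ℝ} (hint : IntegrableOn f BB) {θ : E2} (hθ : θ ≠ 0) (a : ℝ) :
    ContinuousAt (fun p : E2 × ℝ => Fi f p.1 p.2) (θ, a) := by
  have hrw : ∀ p : E2 × ℝ, Fi f p.1 p.2
      = ∫ x in BB, ({x : E2 | ⟪x, p.1⟫ < p.2}).indicator f x := by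
    intro p
    rw [setIntegral_indicator (meas_lt p.1 p.2)]; rfl
  simp only [ContinuousAt]
  apply Filter.Tendsto.congr (fun p => (hrw p).symm)
  rw [hrw (θ, a)]
  apply tendsto_integral_filter_of_dominated_convergence (fun x => ‖f x‖)
  · exact Filter.Eventually.of_forall fun p =>
      hint.aestronglyMeasurable.indicator (meas_lt p.1 p.2)
  · exact Filter.Eventually.of_forall fun p => Filter.Eventually.of_forall fun x =>
      norm_indicator_le_norm_self f x
  · exact hint.norm
  · have hline : ∀ᵐ x ∂(volume.restrict BB), ⟪x, θ⟫ ≠ a := by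
      apply ae_restrict_of_ae
      rw [ae_iff]
      simpa using line_null θ hθ a
    apply hline.mono
    intro x hx
    have hc1 : Filter.Tendsto (fun p : E2 × ℝ => ⟪x, p.1⟫) (nhds (θ, a)) (nhds ⟪x, θ⟫) :=
      ((continuous_const.inner continuous_fst).tendsto _)
    have hc2 : Filter.Tendsto (fun p : E2 × ℝ => p.2) (nhds (θ, a)) (nhds a) :=
      continuous_snd.tendsto _
    rcases lt_or_gt_of_ne hx with hlt | hgt
    · have hev : ∀ᶠ p : E2 × ℝ in nhds (θ, a), ⟪x, p.1⟫ < p.2 := hc1.eventually_lt hc2 hlt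
      have : ({x : E2 | ⟪x, θ⟫ < a}).indicator f x = f x :=
        Set.indicator_of_mem (show x ∈ {x : E2 | ⟪x, θ⟫ < a} from hlt) f
      rw [this]
      apply Filter.Tendsto.congr' _ tendsto_const_nhds
      exact hev.mono fun p hp =>
        (Set.indicator_of_mem (show x ∈ {x : E2 | ⟪x, p.1⟫ < p.2} from hp) f).symm
    · have hev : ∀ᶠ p : E2 × ℝ in nhds (θ, a), p.2 < ⟪x, p.1⟫ := hc2.eventually_lt hc1 hgt
      have : ({x : E2 | ⟪x, θ⟫ < a}).indicator f x = 0 :=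
        Set.indicator_of_notMem (by simp only [Set.mem_setOf_eq, not_lt]; linarith) f
      rw [this]
      apply Filter.Tendsto.congr' _ tendsto_const_nhds
      exact hev.mono fun p hp =>
        (Set.indicator_of_notMem (by simp only [Set.mem_setOf_eq, not_lt]; linarith) f).symm

lemma root_mem {f : E2 → ℝ} (hone : ∫ x in BB, f x = 1) {θ : E2} (hθ : ‖θ‖ = 1)
    {c : ℝ} (hc : Fi f θ c = 1/2) : c ∈ Set.Ioo (-1:ℝ) 1 := by
  constructor
  · by_contra h
    push_neg at h
    rw [Fi_empty hθ h] at hc; norm_num at hc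
  · by_contra h
    push_neg at h
    rw [Fi_full hθ h, hone] at hc; norm_num at hc

lemma root_uniq {f : E2 → ℝ} (hint : IntegrableOn f BB)
    (hpos : ∀ᵐ x ∂(volume.restrict BB), 0 < f x)
    (hone : ∫ x in BB, f x = 1) {θ : E2} (hθ : ‖θ‖ = 1)
    {c d : ℝ} (hc : Fi f θ c = 1/2) (hd : Fi f θ d = 1/2) : c = d := by
  have hcm := root_mem hone hθ hc
  have hdm := root_mem hone hθ hd
  rcases lt_trichotomy c d with h | h | h
  · have := Fi_strict hint hpos hθ hcm.1.le h hdm.2.le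
    rw [hc, hd] at this; norm_num at this
  · exact h
  · have := Fi_strict hint hpos hθ hdm.1.le h hcm.2.le
    rw [hc, hd] at this; norm_num at this

lemma root_exists {f : E2 → ℝ} (hint : IntegrableOn f BB)
    (hone : ∫ x in BB, f x = 1) {θ : E2} (hθ : ‖θ‖ = 1) :
    ∃ a ∈ Set.Ioo (-1:ℝ) 1, Fi f θ a = 1/2 := by
  have hθ0 : θ ≠ 0 := fun h => by simp [h] at hθ
  have hcont : Continuous (fun a => Fi f θ a) := by
    rw [continuous_iff_continuousAt]
    intro a
    exact (Fi_contAt hint hθ0 a).comp ((continuous_const.prodMk continuous_id).continuousAt)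
  have hsub := intermediate_value_Ioo (by norm_num : (-1:ℝ) ≤ 1) hcont.continuousOn
  rw [Fi_empty hθ le_rfl, Fi_full hθ le_rfl, hone] at hsub
  obtain ⟨a, ha, hfa⟩ := hsub (by norm_num : (1/2 : ℝ) ∈ Set.Ioo (0:ℝ) 1)
  exact ⟨a, ha, hfa⟩

noncomputable def θt (t : ℝ) : E2 := (WithLp.equiv 2 (Fin 2 → ℝ)).symm ![Real.cos t, Real.sin t]

lemma θt_norm (t : ℝ) : ‖θt t‖ = 1 := by
  rw [EuclideanSpace.norm_eq]
  simp [θt, Fin.sum_univ_two, sq_abs]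

lemma θt_cont : Continuous θt := by
  apply Continuous.comp (PiLp.continuous_toLp 2 (fun _ : Fin 2 => ℝ))
  apply continuous_pi
  intro i
  fin_cases i <;> simp <;> [exact Real.continuous_cos; exact Real.continuous_sin]

lemma θt_pi (t : ℝ) : θt (t + Real.pi) = -θt t := by
  ext i
  fin_cases i <;>
    simp [θt, WithLp.equiv_symm_apply, Real.cos_add_pi, Real.sin_add_pi]


set_option maxHeartbeats 2000000 in
/-- A single line `{x · θ = a}` simultaneously bisects the mass of `f₁` on one side and
of `f₂` on the other side, for a.e.-positive densities of total mass `1` on the unit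
disk `B ⊂ ℝ²`. -/
theorem stmt0 (f₁ f₂ : EuclideanSpace ℝ (Fin 2) → ℝ)
    (h₁int : IntegrableOn f₁ (ball (0 : EuclideanSpace ℝ (Fin 2)) 1))
    (h₂int : IntegrableOn f₂ (ball (0 : EuclideanSpace ℝ (Fin 2)) 1))
    (h₁pos : ∀ᵐ x ∂(volume.restrict (ball (0 : EuclideanSpace ℝ (Fin 2)) 1)), 0 < f₁ x)
    (h₂pos : ∀ᵐ x ∂(volume.restrict (ball (0 : EuclideanSpace ℝ (Fin 2)) 1)), 0 < f₂ x)
    (h₁one : ∫ x in ball (0 : EuclideanSpace ℝ (Fin 2)) 1, f₁ x = 1)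
    (h₂one : ∫ x in ball (0 : EuclideanSpace ℝ (Fin 2)) 1, f₂ x = 1) :
    ∃ θ : EuclideanSpace ℝ (Fin 2), ‖θ‖ = 1 ∧ ∃ a ∈ Set.Ioo (-1 : ℝ) 1,
      (∫ x in {x : EuclideanSpace ℝ (Fin 2) | x ∈ ball (0 : EuclideanSpace ℝ (Fin 2)) 1 ∧
          ⟪x, θ⟫ < a}, f₁ x) = 1 / 2 ∧
      (∫ x in {x : EuclideanSpace ℝ (Fin 2) | x ∈ ball (0 : EuclideanSpace ℝ (Fin 2)) 1 ∧
          a < ⟪x, θ⟫}, f₂ x) = 1 / 2 := by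

  have h₁int' : IntegrableOn f₁ BB := h₁int
  have h₂int' : IntegrableOn f₂ BB := h₂int
  have h₁pos' : ∀ᵐ x ∂(volume.restrict BB), 0 < f₁ x := h₁pos
  have h₂pos' : ∀ᵐ x ∂(volume.restrict BB), 0 < f₂ x := h₂pos
  have h₁one' : ∫ x in BB, f₁ x = 1 := h₁one
  have h₂one' : ∫ x in BB, f₂ x = 1 := h₂one
  have hnn₁ : 0 ≤ᵐ[volume.restrict BB] f₁ := h₁pos'.mono fun x hx => hx.le
  have hex : ∀ t : ℝ, ∃ a ∈ Set.Ioo (-1:ℝ) 1, Fi f₁ (θt t) a = 1/2 :=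
    fun t => root_exists h₁int' h₁one' (θt_norm t)
  set A : ℝ → ℝ := fun t => (hex t).choose with hA
  have hAmem : ∀ t, A t ∈ Set.Ioo (-1:ℝ) 1 := fun t => (hex t).choose_spec.1
  have hAroot : ∀ t, Fi f₁ (θt t) (A t) = 1/2 := fun t => (hex t).choose_spec.2
  have hθ0 : ∀ t, θt t ≠ 0 := fun t h => by simpa [h] using θt_norm t
  have hlt_half : ∀ t c, c < A t → Fi f₁ (θt t) c < 1/2 := by
    intro t c hc
    rcases le_or_gt c (-1) with h | h
    · rw [Fi_empty (θt_norm t) h]; norm_num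
    · have := Fi_strict h₁int' h₁pos' (θt_norm t) h.le hc (hAmem t).2.le
      rwa [hAroot t] at this
  have hgt_half : ∀ t c, A t < c → 1/2 < Fi f₁ (θt t) c := by
    intro t c hc
    rcases le_or_gt 1 c with h | h
    · rw [Fi_full (θt_norm t) h, h₁one']; norm_num
    · have := Fi_strict h₁int' h₁pos' (θt_norm t) (hAmem t).1.le hc h.le
      rwa [hAroot t] at this
  have hccomp : ∀ (t₀ c : ℝ), ContinuousAt (fun t => Fi f₁ (θt t) c) t₀ := by
    intro t₀ c
    have hp : ContinuousAt (fun t : ℝ => ((θt t, c) : E2 × ℝ)) t₀ :=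
      θt_cont.continuousAt.prodMk continuousAt_const
    show ContinuousAt ((fun p : E2 × ℝ => Fi f₁ p.1 p.2) ∘ (fun t : ℝ => (θt t, c))) t₀
    exact ContinuousAt.comp (Fi_contAt h₁int' (hθ0 t₀) c) hp
  have hAcont : ∀ t₀, ContinuousAt A t₀ := by
    intro t₀
    rw [ContinuousAt, Metric.tendsto_nhds]
    intro ε hε
    have h1 : ∀ᶠ t in nhds t₀, Fi f₁ (θt t) (A t₀ - ε) < 1/2 :=
      (hccomp t₀ (A t₀ - ε)).eventually_lt continuousAt_const (hlt_half t₀ _ (by linarith))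
    have h2 : ∀ᶠ t in nhds t₀, 1/2 < Fi f₁ (θt t) (A t₀ + ε) :=
      continuousAt_const.eventually_lt (hccomp t₀ (A t₀ + ε)) (hgt_half t₀ _ (by linarith))
    filter_upwards [h1, h2] with t ht1 ht2
    have hlb : A t₀ - ε < A t := by
      by_contra hle
      push_neg at hle
      have := Fi_mono h₁int' hnn₁ (θt t) hle
      rw [hAroot t] at this
      linarith
    have hub : A t < A t₀ + ε := by
      by_contra hle
      push_neg at hle
      have := Fi_mono h₁int' hnn₁ (θt t) hle
      rw [hAroot t] at this
      linarith
    rw [Real.dist_eq, abs_lt]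
    constructor <;> linarith
  have hAneg : ∀ t, A (t + Real.pi) = -(A t) := by
    intro t
    apply root_uniq h₁int' h₁pos' h₁one' (θt_norm (t + Real.pi)) (hAroot (t + Real.pi))
    rw [θt_pi, Fi_neg]
    have := Fi_split (θt_norm t) h₁int' (A t)
    rw [hAroot t, h₁one'] at this
    linarith
  set g : ℝ → ℝ := fun t => Fi f₂ (θt t) (A t) with hg
  have hgcont : Continuous g := by
    rw [continuous_iff_continuousAt]; intro t
    have hp : ContinuousAt (fun s : ℝ => ((θt s, A s) : E2 × ℝ)) t :=
      θt_cont.continuousAt.prodMk (hAcont t)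
    show ContinuousAt ((fun p : E2 × ℝ => Fi f₂ p.1 p.2) ∘ (fun s : ℝ => (θt s, A s))) t
    exact ContinuousAt.comp (Fi_contAt h₂int' (hθ0 t) (A t)) hp
  have hgpi : ∀ t, g (t + Real.pi) = 1 - g t := by
    intro t
    simp only [hg]
    rw [hAneg t, θt_pi, Fi_neg]
    have := Fi_split (θt_norm t) h₂int' (A t)
    rw [h₂one'] at this
    linarith
  have hex2 : ∃ t, g t = 1/2 := by
    have hpi : (0:ℝ) ≤ 0 + Real.pi := by have := Real.pi_pos; linarith
    rcases lt_trichotomy (g 0) (1/2) with h | h | h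
    · have h2 : (1/2:ℝ) ∈ Set.Icc (g 0) (g (0 + Real.pi)) := by
        rw [hgpi 0]; constructor <;> [linarith; linarith]
      obtain ⟨t, _, ht⟩ := intermediate_value_Icc hpi hgcont.continuousOn h2
      exact ⟨t, ht⟩
    · exact ⟨0, h⟩
    · have h2 : (1/2:ℝ) ∈ Set.Icc (g (0 + Real.pi)) (g 0) := by
        rw [hgpi 0]; constructor <;> [linarith; linarith]
      obtain ⟨t, _, ht⟩ := intermediate_value_Icc' hpi hgcont.continuousOn h2
      exact ⟨t, ht⟩
  obtain ⟨t, ht⟩ := hex2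
  refine ⟨θt t, θt_norm t, A t, hAmem t, ?_, ?_⟩
  · exact hAroot t
  · have hsplit := Fi_split (θt_norm t) h₂int' (A t)
    rw [h₂one'] at hsplit
    have hgt : Fi f₂ (θt t) (A t) = 1/2 := ht
    have : ∫ x in BB ∩ {x | A t < ⟪x, θt t⟫}, f₂ x = 1/2 := by linarith
    exact this
end

section
/- Let ρ₁, ρ₂ > 0, α₁₁, α₁₂, α₂₁, α₂₂ > -1, and suppose τ'₁, τ'₂ are real numbers with 0 < τ'ᵢ < ρᵢ. If the four inequalities ρ₁² + ρ₂² - ρ₁ρ₂ - 4π(1+α₁₁)ρ₁ - 4π(1+α₂₁)ρ₂ ≤ 0, ρ₁² + ρ₂² - ρ₁ρ₂ - 4π(1+α₁₂)ρ₁ - 4π(1+α₂₂)ρ₂ ≥ 0, ρ₁² - ρ₂² - 4π(1+α₁₁)ρ₁ + 4π(1+α₂₂)ρ₂ ≤ 0, ρ₁² - ρ₂² - 4π(1+α₁₂)ρ₁ + 4π(1+α₂₁)ρ₂ ≥ 0 hold with at least one strict, then the identity ρ₁² + ρ₂² - ρ₁ρ₂ - 4π(1+α₁₁)ρ₁ -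 4π(1+α₂₁)ρ₂ + 4π(2+α₁₁+α₁₂ - ρ₁/(2π) + ρ₂/(4π))τ'₁ + 4π(2+α₂₁+α₂₂ - ρ₂/(2π) + ρ₁/(4π))τ'₂ = 0 cannot hold. -/
open Real

/-- Algebraic core of the nonexistence result on the sphere with two antipodal
singularities: if the four inequalities hold with at least one strict, and
`0 < τ'ᵢ < ρᵢ`, then the Pohožaev identity cannot hold. -/
theorem stmt5 (ρ₁ ρ₂ α₁₁ α₁₂ α₂₁ α₂₂ τ'₁ τ'₂ : ℝ)
    (hρ₁ : 0 < ρ₁) (hρ₂ : 0 < ρ₂)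
    (hα₁₁ : -1 < α₁₁) (hα₁₂ : -1 < α₁₂) (hα₂₁ : -1 < α₂₁) (hα₂₂ : -1 < α₂₂)
    (hτ₁ : 0 < τ'₁) (hτ₁' : τ'₁ < ρ₁) (hτ₂ : 0 < τ'₂) (hτ₂' : τ'₂ < ρ₂)
    (h1 : ρ₁ ^ 2 + ρ₂ ^ 2 - ρ₁ * ρ₂ - 4 * π * (1 + α₁₁) * ρ₁ - 4 * π * (1 + α₂₁) * ρ₂ ≤ 0)
    (h2 : ρ₁ ^ 2 + ρ₂ ^ 2 - ρ₁ * ρ₂ - 4 * π * (1 + α₁₂) * ρ₁ - 4 * π * (1 + α₂₂) * ρ₂ ≥ 0)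
    (h3 : ρ₁ ^ 2 - ρ₂ ^ 2 - 4 * π * (1 + α₁₁) * ρ₁ + 4 * π * (1 + α₂₂) * ρ₂ ≤ 0)
    (h4 : ρ₁ ^ 2 - ρ₂ ^ 2 - 4 * π * (1 + α₁₂) * ρ₁ + 4 * π * (1 + α₂₁) * ρ₂ ≥ 0)
    (hstrict :
      ρ₁ ^ 2 + ρ₂ ^ 2 - ρ₁ * ρ₂ - 4 * π * (1 + α₁₁) * ρ₁ - 4 * π * (1 + α₂₁) * ρ₂ < 0 ∨
      ρ₁ ^ 2 + ρ₂ ^ 2 - ρ₁ * ρ₂ - 4 * π * (1 + α₁₂) * ρ₁ - 4 * π * (1 + α₂₂) * ρ₂ > 0 ∨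
      ρ₁ ^ 2 - ρ₂ ^ 2 - 4 * π * (1 + α₁₁) * ρ₁ + 4 * π * (1 + α₂₂) * ρ₂ < 0 ∨
      ρ₁ ^ 2 - ρ₂ ^ 2 - 4 * π * (1 + α₁₂) * ρ₁ + 4 * π * (1 + α₂₁) * ρ₂ > 0) :
    ¬ (ρ₁ ^ 2 + ρ₂ ^ 2 - ρ₁ * ρ₂ - 4 * π * (1 + α₁₁) * ρ₁ - 4 * π * (1 + α₂₁) * ρ₂
        + 4 * π * (2 + α₁₁ + α₁₂ - ρ₁ / (2 * π) + ρ₂ / (4 * π)) * τ'₁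
        + 4 * π * (2 + α₂₁ + α₂₂ - ρ₂ / (2 * π) + ρ₁ / (4 * π)) * τ'₂ = 0) := by
  intro h
  have hπ : (0:ℝ) < π := Real.pi_pos
  have hπ' : π ≠ 0 := ne_of_gt hπ
  have hA : 4 * π * (2 + α₁₁ + α₁₂ - ρ₁ / (2 * π) + ρ₂ / (4 * π))
      = 4 * π * (2 + α₁₁ + α₁₂) - 2 * ρ₁ + ρ₂ := by
    field_simp
    ring
  have hB : 4 * π * (2 + α₂₁ + α₂₂ - ρ₂ / (2 * π) + ρ₁ / (4 * π))
      = 4 * π * (2 + α₂₁ + α₂₂) - 2 * ρ₂ + ρ₁ := by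
    field_simp
    ring
  rw [hA, hB] at h
  have key : (0:ℝ) =
      (ρ₁ - τ'₁) * (ρ₂ - τ'₂) *
        (ρ₁ ^ 2 + ρ₂ ^ 2 - ρ₁ * ρ₂ - 4 * π * (1 + α₁₁) * ρ₁ - 4 * π * (1 + α₂₁) * ρ₂)
      - τ'₁ * (ρ₂ - τ'₂) *
        (ρ₁ ^ 2 - ρ₂ ^ 2 - 4 * π * (1 + α₁₂) * ρ₁ + 4 * π * (1 + α₂₁) * ρ₂)
      + (ρ₁ - τ'₁) * τ'₂ *
        (ρ₁ ^ 2 - ρ₂ ^ 2 - 4 * π * (1 + α₁₁) * ρ₁ + 4 * π * (1 + α₂₂) * ρ₂)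
      - τ'₁ * τ'₂ *
        (ρ₁ ^ 2 + ρ₂ ^ 2 - ρ₁ * ρ₂ - 4 * π * (1 + α₁₂) * ρ₁ - 4 * π * (1 + α₂₂) * ρ₂) := by
    linear_combination (-(ρ₁ * ρ₂)) * h
  have f1 : 0 < ρ₁ - τ'₁ := by linarith
  have f2 : 0 < ρ₂ - τ'₂ := by linarith
  rcases hstrict with hs | hs | hs | hs
  all_goals {
    first
    | (have t1 : (ρ₁ - τ'₁) * (ρ₂ - τ'₂) *
          (ρ₁ ^ 2 + ρ₂ ^ 2 - ρ₁ * ρ₂ - 4 * π * (1 + α₁₁) * ρ₁ - 4 * π * (1 + α₂₁) * ρ₂) ≤ 0 :=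
        mul_nonpos_iff.mpr (Or.inl ⟨(mul_pos f1 f2).le, h1⟩)
       have t2 : 0 ≤ τ'₁ * (ρ₂ - τ'₂) *
          (ρ₁ ^ 2 - ρ₂ ^ 2 - 4 * π * (1 + α₁₂) * ρ₁ + 4 * π * (1 + α₂₁) * ρ₂) :=
        mul_nonneg (mul_pos hτ₁ f2).le h4
       have t3 : (ρ₁ - τ'₁) * τ'₂ *
          (ρ₁ ^ 2 - ρ₂ ^ 2 - 4 * π * (1 + α₁₁) * ρ₁ + 4 * π * (1 + α₂₂) * ρ₂) ≤ 0 :=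
        mul_nonpos_iff.mpr (Or.inl ⟨(mul_pos f1 hτ₂).le, h3⟩)
       have t4 : 0 ≤ τ'₁ * τ'₂ *
          (ρ₁ ^ 2 + ρ₂ ^ 2 - ρ₁ * ρ₂ - 4 * π * (1 + α₁₂) * ρ₁ - 4 * π * (1 + α₂₂) * ρ₂) :=
        mul_nonneg (mul_pos hτ₁ hτ₂).le h2
       first
       | (have s1 : (ρ₁ - τ'₁) * (ρ₂ - τ'₂) *
            (ρ₁ ^ 2 + ρ₂ ^ 2 - ρ₁ * ρ₂ - 4 * π * (1 + α₁₁) * ρ₁ - 4 * π * (1 + α₂₁) * ρ₂) < 0 :=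
          mul_neg_of_pos_of_neg (mul_pos f1 f2) hs
          linarith [key, s1, t2, t3, t4])
       | (have s2 : 0 < τ'₁ * (ρ₂ - τ'₂) *
            (ρ₁ ^ 2 - ρ₂ ^ 2 - 4 * π * (1 + α₁₂) * ρ₁ + 4 * π * (1 + α₂₁) * ρ₂) :=
          mul_pos (mul_pos hτ₁ f2) hs
          linarith [key, t1, s2, t3, t4])
       | (have s3 : (ρ₁ - τ'₁) * τ'₂ *
            (ρ₁ ^ 2 - ρ₂ ^ 2 - 4 * π * (1 + α₁₁) * ρ₁ + 4 * π * (1 + α₂₂) * ρ₂) < 0 :=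
          mul_neg_of_pos_of_neg (mul_pos f1 hτ₂) hs
          linarith [key, t1, t2, s3, t4])
       | (have s4 : 0 < τ'₁ * τ'₂ *
            (ρ₁ ^ 2 + ρ₂ ^ 2 - ρ₁ * ρ₂ - 4 * π * (1 + α₁₂) * ρ₁ - 4 * π * (1 + α₂₂) * ρ₂) :=
          mul_pos (mul_pos hτ₁ hτ₂) hs
          linarith [key, t1, t2, t3, s4]))
  }
end
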